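/- Let X ∈ ℝ^{d×n} with n ≥ 1, λ > 0, μ > 0, 0 < p, q < 2, and let (Z_t)_{t≥1} be a sequence in ℝ^{n×n} such that for every t, p·Z_{t+1}M_t + λq·Xᵀ(XZ_{t+1} − X)N_t = 0, where M_t = (Z_tᵀZ_t + μ²I)^{p/2−1} and N_t is the diagonal matrix with (N_t)_{ii} = (‖(XZ_t − X)_i‖_2² + μ²)^{q/2−1}. Set D = J(Z_1, μ) and θ = min{ D^{(p−2)/p}, (D/λ)^{(q−2)/q} } > 0. Then ∑_{t=1}^∞ ( p‖Z_t − Z_{t+1}‖_F² + λq‖X(Z_t − Z_{t+1})‖_F² ) ≤ 2D/θ; in particular the series converges. -/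

import Mathlib

open Matrix

/-- Real power of a real symmetric matrix, defined through the spectral decomposition
`A = U · diag(λ₁,…,λₙ) · Uᵀ` as `A^r = U · diag(λ₁^r,…,λₙ^r) · Uᵀ`
(junk value `0` if `A` is not symmetric). -/
noncomputable def mpow {n : ℕ} (A : Matrix (Fin n) (Fin n) ℝ) (r : ℝ) :
    Matrix (Fin n) (Fin n) ℝ :=
  if hA : A.IsHermitian then hA.cfc (fun x : ℝ => x ^ r) else 0

/-- The smoothed LRR objective
`J(Z, μ) = Tr((ZᵀZ + μ²I)^{p/2}) + λ·∑ᵢ (‖(XZ − X)ᵢ‖₂² + μ²)^{q/2}`,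
where `(XZ − X)ᵢ` denotes the `i`-th column of `XZ − X`. -/
noncomputable def smoothJ {d n : ℕ} (X : Matrix (Fin d) (Fin n) ℝ) (lam p q : ℝ)
    (Z : Matrix (Fin n) (Fin n) ℝ) (μ : ℝ) : ℝ :=
  (mpow (Zᵀ * Z + μ ^ 2 • (1 : Matrix (Fin n) (Fin n) ℝ)) (p / 2)).trace +
    lam * ∑ i, (∑ j, ((X * Z - X) j i) ^ 2 + μ ^ 2) ^ (q / 2)

lemma amgm {r a b : ℝ} (hr0 : 0 < r) (hr1 : r < 1) (ha : 0 < a) (hb : 0 ≤ b) :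
    b ^ r ≤ r * (a ^ (r - 1) * b) + (1 - r) * a ^ r := by
  have h := Real.geom_mean_le_arith_mean2_weighted (w₁ := r) (w₂ := 1 - r)
    (p₁ := a ^ (r - 1) * b) (p₂ := a ^ r) hr0.le (by linarith)
    (mul_nonneg (Real.rpow_nonneg ha.le _) hb) (Real.rpow_nonneg ha.le r) (by ring)
  calc b ^ r = (a ^ (r - 1) * b) ^ r * (a ^ r) ^ (1 - r) := by
        rw [Real.mul_rpow (Real.rpow_nonneg ha.le _) hb,
          ← Real.rpow_mul ha.le, ← Real.rpow_mul ha.le, mul_comm (a ^ ((r - 1) * r)),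
          mul_assoc, ← Real.rpow_add ha]
        ring_nf
        rw [Real.rpow_zero, mul_one]
    _ ≤ _ := h

section cfcfacts
variable {m : Type*} [Fintype m] [DecidableEq m] {A : Matrix m m ℝ} (hA : A.IsHermitian)

lemma trace_diag_mul (v : m → ℝ) (C : Matrix m m ℝ) :
    (Matrix.diagonal v * C).trace = ∑ i, v i * C i i := by
  simp [Matrix.trace, Matrix.diag, Matrix.diagonal_mul]

lemma trace_cfc_mul (f : ℝ → ℝ) (B : Matrix m m ℝ) :
    (hA.cfc f * B).trace = ∑ i, f (hA.eigenvalues i) *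
      ((star (hA.eigenvectorUnitary : Matrix m m ℝ)) * B *
        (hA.eigenvectorUnitary : Matrix m m ℝ)) i i := by
  have h1 : hA.cfc f * B = (hA.eigenvectorUnitary : Matrix m m ℝ) *
      (Matrix.diagonal (f ∘ hA.eigenvalues) *
        ((star (hA.eigenvectorUnitary : Matrix m m ℝ)) * B)) := by
    rw [Matrix.IsHermitian.cfc, Unitary.conjStarAlgAut_apply]
    simp only [mul_assoc]
    congr 1
  rw [h1, Matrix.trace_mul_comm, mul_assoc, trace_diag_mul]
  simp [Function.comp, mul_assoc]


lemma trace_cfc (f : ℝ → ℝ) : (hA.cfc f).trace = ∑ i, f (hA.eigenvalues i) := by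
  have := trace_cfc_mul hA f 1
  rw [mul_one] at this
  rw [this]
  congr 1; ext i
  rw [mul_one, Unitary.coe_star_mul_self, Matrix.one_apply_eq, mul_one]

lemma trace_cfc_mul_self (f : ℝ → ℝ) :
    (hA.cfc f * A).trace = ∑ i, f (hA.eigenvalues i) * hA.eigenvalues i := by
  rw [trace_cfc_mul hA f A, show (star (hA.eigenvectorUnitary : Matrix m m ℝ)) * A *
      (hA.eigenvectorUnitary : Matrix m m ℝ) = Matrix.diagonal (RCLike.ofReal ∘ hA.eigenvalues) by
    simpa using hA.conjStarAlgAut_star_eigenvectorUnitary]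
  congr 1; ext i
  simp


lemma conj_entry (hA : A.IsHermitian) {B : Matrix m m ℝ} (hB : B.IsHermitian) (i : m) :
    ((star (hA.eigenvectorUnitary : Matrix m m ℝ)) * B *
        (hA.eigenvectorUnitary : Matrix m m ℝ)) i i =
      ∑ j, ((star (hA.eigenvectorUnitary : Matrix m m ℝ) *
          (hB.eigenvectorUnitary : Matrix m m ℝ)) i j) ^ 2 * hB.eigenvalues j := by
  set U : Matrix m m ℝ := (hA.eigenvectorUnitary : Matrix m m ℝ)
  set V : Matrix m m ℝ := (hB.eigenvectorUnitary : Matrix m m ℝ)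
  have hBs : B = V * Matrix.diagonal hB.eigenvalues * star V := by
    have := hB.spectral_theorem
    simpa using this
  have key : star U * B * U = (star U * V) * Matrix.diagonal hB.eigenvalues * star (star U * V) := by
    conv_lhs => rw [hBs]
    rw [StarMul.star_mul, star_star]
    simp only [mul_assoc]
  rw [key]
  rw [Matrix.mul_apply]
  refine Finset.sum_congr rfl fun j _ => ?_
  rw [Matrix.mul_diagonal]
  have : star (star U * V) j i = (star U * V) i j := by
    simp [Matrix.star_eq_conjTranspose]
  rw [this]
  ring


lemma rowcol_sums (hA : A.IsHermitian) {B : Matrix m m ℝ} (hB : B.IsHermitian) :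
    (∀ i, ∑ j, ((star (hA.eigenvectorUnitary : Matrix m m ℝ) *
          (hB.eigenvectorUnitary : Matrix m m ℝ)) i j) ^ 2 = 1) ∧
    (∀ j, ∑ i, ((star (hA.eigenvectorUnitary : Matrix m m ℝ) *
          (hB.eigenvectorUnitary : Matrix m m ℝ)) i j) ^ 2 = 1) := by
  set U : Matrix m m ℝ := (hA.eigenvectorUnitary : Matrix m m ℝ)
  set V : Matrix m m ℝ := (hB.eigenvectorUnitary : Matrix m m ℝ)
  set W : Matrix m m ℝ := star U * V with hW
  have hsW : star W = star V * U := by rw [hW, StarMul.star_mul, star_star]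
  have hV1 : V * star V = 1 := Matrix.mem_unitaryGroup_iff.mp hB.eigenvectorUnitary.2
  have hU1 : U * star U = 1 := Matrix.mem_unitaryGroup_iff.mp hA.eigenvectorUnitary.2
  have hU1' : star U * U = 1 := Matrix.mem_unitaryGroup_iff'.mp hA.eigenvectorUnitary.2
  have hV1' : star V * V = 1 := Matrix.mem_unitaryGroup_iff'.mp hB.eigenvectorUnitary.2
  have h1 : W * star W = 1 := by
    rw [hsW, hW, mul_assoc, ← mul_assoc V, hV1, one_mul, hU1']
  have h2 : star W * W = 1 := by
    rw [hsW, hW, mul_assoc, ← mul_assoc U, hU1, one_mul, hV1']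
  constructor
  · intro i
    have := congrArg (fun M => M i i) h1
    simp only [Matrix.mul_apply, Matrix.one_apply_eq] at this
    rw [← this]
    refine Finset.sum_congr rfl fun j _ => ?_
    simp [hsW, Matrix.star_eq_conjTranspose, sq]
  · intro j
    have := congrArg (fun M => M j j) h2
    simp only [Matrix.mul_apply, Matrix.one_apply_eq] at this
    rw [← this]
    refine Finset.sum_congr rfl fun i _ => ?_
    simp [hsW, Matrix.star_eq_conjTranspose, sq]


lemma klein {B : Matrix m m ℝ} (hA : A.IsHermitian) (hB : B.IsHermitian)
    (ha : ∀ i, 0 < hA.eigenvalues i) (hb : ∀ j, 0 ≤ hB.eigenvalues j)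
    {r : ℝ} (hr0 : 0 < r) (hr1 : r < 1) :
    (hB.cfc (fun x => x ^ r)).trace ≤
      r * (hA.cfc (fun x => x ^ (r - 1)) * B).trace +
        (1 - r) * (hA.cfc (fun x => x ^ r)).trace := by
  obtain ⟨hrow, hcol⟩ := rowcol_sums hA hB
  set W : Matrix m m ℝ := star (hA.eigenvectorUnitary : Matrix m m ℝ) *
    (hB.eigenvectorUnitary : Matrix m m ℝ) with hW
  rw [trace_cfc hB, trace_cfc hA, trace_cfc_mul hA]
  have hmid : ∀ i, ((star (hA.eigenvectorUnitary : Matrix m m ℝ)) * B *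
      (hA.eigenvectorUnitary : Matrix m m ℝ)) i i = ∑ j, (W i j) ^ 2 * hB.eigenvalues j :=
    fun i => conj_entry hA hB i
  simp only [hmid]
  calc ∑ j, hB.eigenvalues j ^ r
      = ∑ j, ∑ i, (W i j) ^ 2 * hB.eigenvalues j ^ r := by
        refine Finset.sum_congr rfl fun j _ => ?_
        rw [← Finset.sum_mul, hcol j, one_mul]
    _ ≤ ∑ j, ∑ i, (W i j) ^ 2 * (r * (hA.eigenvalues i ^ (r - 1) * hB.eigenvalues j) +
          (1 - r) * hA.eigenvalues i ^ r) := by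
        refine Finset.sum_le_sum fun j _ => Finset.sum_le_sum fun i _ => ?_
        exact mul_le_mul_of_nonneg_left (amgm hr0 hr1 (ha i) (hb j)) (sq_nonneg _)
    _ = ∑ i, (r * (hA.eigenvalues i ^ (r - 1) * ∑ j, (W i j) ^ 2 * hB.eigenvalues j) +
          (1 - r) * hA.eigenvalues i ^ r) := by
        rw [Finset.sum_comm]
        refine Finset.sum_congr rfl fun i _ => ?_
        simp only [mul_add, Finset.sum_add_distrib]
        congr 1
        · rw [Finset.mul_sum, Finset.mul_sum]
          refine Finset.sum_congr rfl fun j _ => ?_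
          ring
        · rw [← Finset.sum_mul, hrow i, one_mul]
    _ = _ := by
        rw [Finset.sum_add_distrib, ← Finset.mul_sum, ← Finset.mul_sum]


lemma conj_diag_nonneg {S : Matrix m m ℝ} (hS : S.PosSemidef) (U : Matrix m m ℝ) (i : m) :
    0 ≤ (Uᵀ * S * U) i i := by
  have h := hS.dotProduct_mulVec_nonneg (fun k => U k i)
  simp only [star_trivial, dotProduct, Matrix.mulVec, Finset.mul_sum] at h
  calc (0:ℝ) ≤ ∑ k, ∑ l, U k i * (S k l * U l i) := h
    _ = (Uᵀ * S * U) i i := by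
        simp only [Matrix.mul_apply, Matrix.transpose_apply, Finset.sum_mul]
        rw [Finset.sum_comm]
        refine Finset.sum_congr rfl fun l _ => Finset.sum_congr rfl fun k _ => ?_
        ring

lemma trace_conj (U : Matrix m m ℝ) (hU : U * Uᵀ = 1) (S : Matrix m m ℝ) :
    (Uᵀ * S * U).trace = S.trace := by
  rw [Matrix.trace_mul_cycle, hU, one_mul]

lemma trace_cfc_mul_ge {S : Matrix m m ℝ} (hA : A.IsHermitian) (hS : S.PosSemidef)
    {f : ℝ → ℝ} {θ : ℝ} (hf : ∀ i, θ ≤ f (hA.eigenvalues i)) :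
    θ * S.trace ≤ (hA.cfc f * S).trace := by
  set U : Matrix m m ℝ := (hA.eigenvectorUnitary : Matrix m m ℝ)
  have hstar : star U = Uᵀ := by
    rw [Matrix.star_eq_conjTranspose, Matrix.conjTranspose_eq_transpose_of_trivial]
  have hU1 : U * Uᵀ = 1 := by
    rw [← hstar]; exact Matrix.mem_unitaryGroup_iff.mp hA.eigenvectorUnitary.2
  rw [trace_cfc_mul hA f S, hstar, ← trace_conj U hU1 S]
  have hdiag := fun i => conj_diag_nonneg hS U i
  rw [Matrix.trace, Finset.mul_sum]
  exact Finset.sum_le_sum fun i _ => mul_le_mul_of_nonneg_right (hf i) (hdiag i)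

lemma cfc_posSemidef (hA : A.IsHermitian) {f : ℝ → ℝ}
    (hf : ∀ i, 0 ≤ f (hA.eigenvalues i)) : (hA.cfc f).PosSemidef := by
  rw [Matrix.IsHermitian.cfc]
  have : (Matrix.diagonal (RCLike.ofReal ∘ f ∘ hA.eigenvalues) : Matrix m m ℝ).PosSemidef := by
    refine Matrix.posSemidef_diagonal_iff.mpr fun i => ?_
    simpa using hf i
  have h2 := this.mul_mul_conjTranspose_same (hA.eigenvectorUnitary : Matrix m m ℝ)
  rwa [← Matrix.star_eq_conjTranspose] at h2


lemma herm_AW (W : Matrix m m ℝ) (c : ℝ) :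
    (Wᵀ * W + c • (1 : Matrix m m ℝ)).IsHermitian := by
  have h1 : (Wᵀ * W).IsHermitian := by
    have := Matrix.isHermitian_conjTranspose_mul_self W
    rwa [Matrix.conjTranspose_eq_transpose_of_trivial] at this
  have h2 : (c • (1 : Matrix m m ℝ)).IsHermitian := by
    rw [Matrix.smul_one_eq_diagonal]
    exact Matrix.isHermitian_diagonal _
  exact h1.add h2

lemma posdef_AW (W : Matrix m m ℝ) {c : ℝ} (hc : 0 < c) [Nonempty m] :
    (Wᵀ * W + c • (1 : Matrix m m ℝ)).PosDef := by
  have h1 : (Wᵀ * W).PosSemidef := by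
    have := Matrix.posSemidef_conjTranspose_mul_self W
    rwa [Matrix.conjTranspose_eq_transpose_of_trivial] at this
  have h2 : (c • (1 : Matrix m m ℝ)).PosDef := by
    rw [Matrix.smul_one_eq_diagonal]
    exact Matrix.PosDef.diagonal fun _ => hc
  exact Matrix.PosDef.posSemidef_add h1 h2


lemma cross_term (M : Matrix m m ℝ) (hM : M.IsHermitian) (W₂ Δ : Matrix m m ℝ) :
    (M * (W₂ᵀ * Δ + Δᵀ * W₂)).trace = 2 * (Δᵀ * (W₂ * M)).trace := by
  have h1 : (M * (Δᵀ * W₂)).trace = (Δᵀ * (W₂ * M)).trace := by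
    rw [Matrix.trace_mul_comm, mul_assoc]
  have hMt : Mᵀ = M := by
    rw [← Matrix.conjTranspose_eq_transpose_of_trivial]; exact hM
  have h2 : (M * (W₂ᵀ * Δ)).trace = (Δᵀ * (W₂ * M)).trace := by
    have ht : (M * (W₂ᵀ * Δ))ᵀ = Δᵀ * (W₂ * M) := by
      rw [Matrix.transpose_mul, Matrix.transpose_mul, Matrix.transpose_transpose, hMt,
        mul_assoc]
    rw [← Matrix.trace_transpose (M * (W₂ᵀ * Δ)), ht]
  rw [mul_add, Matrix.trace_add, h1, h2]
  ring


lemma cross_general {d' : Type*} [Fintype d'] (N : Matrix m m ℝ) (hN : Nᵀ = N)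
    (G H : Matrix d' m ℝ) :
    (N * (Gᵀ * H + Hᵀ * G)).trace = 2 * (Hᵀ * (G * N)).trace := by
  have h1 : (N * (Hᵀ * G)).trace = (Hᵀ * (G * N)).trace := by
    rw [Matrix.trace_mul_comm, Matrix.mul_assoc]
  have h2 : (N * (Gᵀ * H)).trace = (Hᵀ * (G * N)).trace := by
    have ht : (N * (Gᵀ * H))ᵀ = Hᵀ * (G * N) := by
      rw [Matrix.transpose_mul, Matrix.transpose_mul, Matrix.transpose_transpose, hN,
        Matrix.mul_assoc]
    rw [← Matrix.trace_transpose (N * (Gᵀ * H)), ht]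
  rw [mul_add, Matrix.trace_add, h1, h2]; ring

lemma quad_expand {d' : Type*} [Fintype d'] (Xm : Matrix d' m ℝ) (M : Matrix m m ℝ)
    (hMt : Mᵀ = M) (ν : m → ℝ) (c₁ c₂ : ℝ) (W₁ W₂ : Matrix m m ℝ)
    (hgrad : c₁ • (W₂ * M) +
      c₂ • (Xmᵀ * ((Xm * W₂ - Xm) * Matrix.diagonal ν)) = 0) :
    (c₁ / 2) * (M * (W₁ᵀ * W₁)).trace +
        (c₂ / 2) * (Matrix.diagonal ν * ((Xm * W₁ - Xm)ᵀ * (Xm * W₁ - Xm))).trace =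
      (c₁ / 2) * (M * (W₂ᵀ * W₂)).trace +
          (c₂ / 2) * (Matrix.diagonal ν * ((Xm * W₂ - Xm)ᵀ * (Xm * W₂ - Xm))).trace +
        ((c₁ / 2) * (M * ((W₁ - W₂)ᵀ * (W₁ - W₂))).trace +
          (c₂ / 2) * (Matrix.diagonal ν * ((Xm * (W₁ - W₂))ᵀ * (Xm * (W₁ - W₂)))).trace) := by
  set Δ : Matrix m m ℝ := W₁ - W₂ with hΔ
  set G : Matrix d' m ℝ := Xm * W₂ - Xm with hG
  set N : Matrix m m ℝ := Matrix.diagonal ν with hNdef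
  have hNt : Nᵀ = N := by rw [hNdef, Matrix.diagonal_transpose]
  have hW₁ : W₁ = W₂ + Δ := by rw [hΔ]; abel
  have e1 : W₁ᵀ * W₁ = W₂ᵀ * W₂ + Δᵀ * Δ + (W₂ᵀ * Δ + Δᵀ * W₂) := by
    conv_lhs => rw [hW₁]
    simp only [Matrix.transpose_add, Matrix.add_mul, Matrix.mul_add]
    abel
  have e2 : Xm * W₁ - Xm = G + Xm * Δ := by
    rw [hW₁, hG, Matrix.mul_add]; abel
  have e3 : (Xm * W₁ - Xm)ᵀ * (Xm * W₁ - Xm) =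
      Gᵀ * G + (Xm * Δ)ᵀ * (Xm * Δ) + (Gᵀ * (Xm * Δ) + (Xm * Δ)ᵀ * G) := by
    rw [e2]
    simp only [Matrix.transpose_add, Matrix.add_mul, Matrix.mul_add]
    abel
  have hL1 : (M * (W₁ᵀ * W₁)).trace = (M * (W₂ᵀ * W₂)).trace + (M * (Δᵀ * Δ)).trace +
      2 * (Δᵀ * (W₂ * M)).trace := by
    rw [e1, Matrix.mul_add, Matrix.mul_add, Matrix.trace_add, Matrix.trace_add,
      cross_general M hMt W₂ Δ]
  have hL2 : (N * ((Xm * W₁ - Xm)ᵀ * (Xm * W₁ - Xm))).trace =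
      (N * (Gᵀ * G)).trace + (N * ((Xm * Δ)ᵀ * (Xm * Δ))).trace +
        2 * ((Xm * Δ)ᵀ * (G * N)).trace := by
    rw [e3, Matrix.mul_add, Matrix.mul_add, Matrix.trace_add, Matrix.trace_add,
      cross_general N hNt G (Xm * Δ)]
  have hXΔ : (Xm * Δ)ᵀ * (G * N) = Δᵀ * (Xmᵀ * (G * N)) := by
    rw [Matrix.transpose_mul, Matrix.mul_assoc]
  have hzero : c₁ * (Δᵀ * (W₂ * M)).trace + c₂ * ((Xm * Δ)ᵀ * (G * N)).trace = 0 := by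
    have h := congrArg (fun B => (Δᵀ * B).trace) hgrad
    simp only [Matrix.mul_add, Matrix.mul_smul, Matrix.trace_add, Matrix.trace_smul,
      smul_eq_mul, Matrix.mul_zero, Matrix.trace_zero] at h
    rw [hXΔ]
    convert h using 3
  linear_combination (c₁ / 2) * hL1 + (c₂ / 2) * hL2 + hzero

lemma trace_sq {d' : Type*} [Fintype d'] (B : Matrix d' m ℝ) :
    (Bᵀ * B).trace = ∑ i, ∑ j, (B i j) ^ 2 := by
  have h : ∀ k, (Bᵀ * B) k k = ∑ i, (B i k) ^ 2 := fun k => by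
    simp [Matrix.mul_apply, sq]
  rw [Matrix.trace]
  simp only [Matrix.diag]
  rw [Finset.sum_congr rfl fun k _ => h k, Finset.sum_comm]

lemma trace_diag_mul_sq {d' : Type*} [Fintype d'] (ν : m → ℝ) (B : Matrix d' m ℝ) :
    (Matrix.diagonal ν * (Bᵀ * B)).trace = ∑ i, ν i * ∑ j, (B j i) ^ 2 := by
  rw [trace_diag_mul]
  refine Finset.sum_congr rfl fun i _ => ?_
  congr 1
  simp [Matrix.mul_apply, sq]

lemma psd_tr_mul_self {d' : Type*} [Fintype d'] (B : Matrix d' m ℝ) :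
    (Bᵀ * B).PosSemidef := by
  have := Matrix.posSemidef_conjTranspose_mul_self B
  rwa [Matrix.conjTranspose_eq_transpose_of_trivial] at this

end cfcfacts

lemma mpow_eq {k : ℕ} {A : Matrix (Fin k) (Fin k) ℝ} (hA : A.IsHermitian) (r : ℝ) :
    mpow A r = hA.cfc (fun x => x ^ r) := by rw [mpow, dif_pos hA]

lemma smoothJ_eq {d n : ℕ} (X : Matrix (Fin d) (Fin n) ℝ) (lam p q : ℝ)
    (W : Matrix (Fin n) (Fin n) ℝ) (μ : ℝ)
    (hA : (Wᵀ * W + μ ^ 2 • (1 : Matrix (Fin n) (Fin n) ℝ)).IsHermitian) :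
    smoothJ X lam p q W μ = (∑ i, hA.eigenvalues i ^ (p / 2)) +
      lam * ∑ i, (∑ j, ((X * W - X) j i) ^ 2 + μ ^ 2) ^ (q / 2) := by
  rw [smoothJ, mpow_eq hA, trace_cfc hA]

set_option maxHeartbeats 1000000 in
lemma one_step {d n : ℕ} (hn : 1 ≤ n) (X : Matrix (Fin d) (Fin n) ℝ) (lam p q μ : ℝ)
    (hlam : 0 < lam) (hμ : 0 < μ) (hp0 : 0 < p) (hp2 : p < 2) (hq0 : 0 < q) (hq2 : q < 2)
    (W₁ W₂ : Matrix (Fin n) (Fin n) ℝ)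
    (hupd : p • (W₂ *
        mpow (W₁ᵀ * W₁ + μ ^ 2 • (1 : Matrix (Fin n) (Fin n) ℝ)) (p / 2 - 1)) +
      (lam * q) • (Xᵀ * ((X * W₂ - X) *
        Matrix.diagonal fun i => (∑ j, ((X * W₁ - X) j i) ^ 2 + μ ^ 2) ^ (q / 2 - 1))) = 0)
    (D θ : ℝ) (hJD : smoothJ X lam p q W₁ μ ≤ D)
    (hθ1 : θ ≤ D ^ ((p - 2) / p)) (hθ2 : θ ≤ (D / lam) ^ ((q - 2) / q)) :
    smoothJ X lam p q W₂ μ +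
      (θ / 2) * (p * (∑ i, ∑ j, ((W₁ - W₂) i j) ^ 2) +
        lam * q * (∑ i, ∑ j, ((X * (W₁ - W₂)) i j) ^ 2)) ≤ smoothJ X lam p q W₁ μ := by
  have hne : Nonempty (Fin n) := Fin.pos_iff_nonempty.mp hn
  have hA₁ : (W₁ᵀ * W₁ + μ ^ 2 • (1 : Matrix (Fin n) (Fin n) ℝ)).IsHermitian :=
    herm_AW W₁ (μ ^ 2)
  have hA₂ : (W₂ᵀ * W₂ + μ ^ 2 • (1 : Matrix (Fin n) (Fin n) ℝ)).IsHermitian :=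
    herm_AW W₂ (μ ^ 2)
  have hpd₁ := posdef_AW W₁ (c := μ ^ 2) (by positivity)
  have hpd₂ := posdef_AW W₂ (c := μ ^ 2) (by positivity)
  have ha : ∀ i, 0 < hA₁.eigenvalues i := fun i => hpd₁.eigenvalues_pos i
  have hb : ∀ i, 0 ≤ hA₂.eigenvalues i := fun i => hpd₂.posSemidef.eigenvalues_nonneg i
  have hr0 : 0 < p / 2 := by linarith
  have hr1 : p / 2 < 1 := by linarith
  have hs0 : 0 < q / 2 := by linarith
  have hs1 : q / 2 < 1 := by linarith
  -- column data
  set e₁ : Fin n → ℝ := fun i => ∑ j, ((X * W₁ - X) j i) ^ 2 with he₁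
  set e₂ : Fin n → ℝ := fun i => ∑ j, ((X * W₂ - X) j i) ^ 2 with he₂
  have he₁pos : ∀ i, 0 < e₁ i + μ ^ 2 := fun i => by
    have : 0 ≤ e₁ i := Finset.sum_nonneg fun j _ => sq_nonneg _
    positivity
  have he₂nn : ∀ i, 0 ≤ e₂ i + μ ^ 2 := fun i => by
    have : 0 ≤ e₂ i := Finset.sum_nonneg fun j _ => sq_nonneg _
    positivity
  set ν : Fin n → ℝ := fun i => (e₁ i + μ ^ 2) ^ (q / 2 - 1) with hν
  set M : Matrix (Fin n) (Fin n) ℝ := hA₁.cfc (fun x => x ^ (p / 2 - 1)) with hM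
  have hMpsd : M.PosSemidef :=
    cfc_posSemidef hA₁ (fun i => (Real.rpow_pos_of_pos (ha i) _).le)
  have hMt : Mᵀ = M := by
    rw [← Matrix.conjTranspose_eq_transpose_of_trivial]; exact hMpsd.isHermitian
  -- the update equation in cfc form
  rw [mpow_eq hA₁] at hupd
  -- J values in sum form
  have hJ₁ : smoothJ X lam p q W₁ μ =
      (∑ i, hA₁.eigenvalues i ^ (p / 2)) + lam * ∑ i, (e₁ i + μ ^ 2) ^ (q / 2) :=
    smoothJ_eq X lam p q W₁ μ hA₁
  have hJ₂ : smoothJ X lam p q W₂ μ =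
      (∑ i, hA₂.eigenvalues i ^ (p / 2)) + lam * ∑ i, (e₂ i + μ ^ 2) ^ (q / 2) :=
    smoothJ_eq X lam p q W₂ μ hA₂
  -- Klein inequality for the trace part
  have hK := klein hA₁ hA₂ ha hb hr0 hr1
  rw [trace_cfc hA₂, trace_cfc hA₁] at hK
  -- split Tr(M * A₂)
  have hMA₂ : (M * (W₂ᵀ * W₂ + μ ^ 2 • (1 : Matrix (Fin n) (Fin n) ℝ))).trace =
      (M * (W₂ᵀ * W₂)).trace + μ ^ 2 * M.trace := by
    rw [Matrix.mul_add, Matrix.trace_add, Matrix.mul_smul, Matrix.trace_smul, mul_one,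
      smul_eq_mul]
  -- Tr(M * A₁) equals the p/2-trace
  have hMA₁ : (M * (W₁ᵀ * W₁ + μ ^ 2 • (1 : Matrix (Fin n) (Fin n) ℝ))).trace =
      ∑ i, hA₁.eigenvalues i ^ (p / 2) := by
    rw [hM, trace_cfc_mul_self hA₁]
    refine Finset.sum_congr rfl fun i _ => ?_
    rw [← Real.rpow_add_one (ha i).ne']
    norm_num
  have hMA₁' : (M * (W₁ᵀ * W₁)).trace + μ ^ 2 * M.trace =
      ∑ i, hA₁.eigenvalues i ^ (p / 2) := by
    rw [← hMA₁, Matrix.mul_add, Matrix.trace_add, Matrix.mul_smul, Matrix.trace_smul, mul_one,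
      smul_eq_mul]
  -- scalar Klein for columns
  have hcol : ∀ i, (e₂ i + μ ^ 2) ^ (q / 2) ≤
      q / 2 * (ν i * (e₂ i + μ ^ 2)) + (1 - q / 2) * (e₁ i + μ ^ 2) ^ (q / 2) := by
    intro i
    have h := amgm hs0 hs1 (he₁pos i) (he₂nn i)
    calc (e₂ i + μ ^ 2) ^ (q / 2) ≤
        q / 2 * ((e₁ i + μ ^ 2) ^ (q / 2 - 1) * (e₂ i + μ ^ 2)) +
          (1 - q / 2) * (e₁ i + μ ^ 2) ^ (q / 2) := h
      _ = _ := by rw [hν]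
  have hνmul : ∀ i, ν i * (e₁ i + μ ^ 2) = (e₁ i + μ ^ 2) ^ (q / 2) := by
    intro i
    rw [hν]
    rw [← Real.rpow_add_one (he₁pos i).ne']
    norm_num
  -- update equation with folded names
  have hupd' : p • (W₂ * M) +
      (lam * q) • (Xᵀ * ((X * W₂ - X) * Matrix.diagonal ν)) = 0 := hupd
  -- Klein with M
  have hK : ∑ i, hA₂.eigenvalues i ^ (p / 2) ≤
      p / 2 * (M * (W₂ᵀ * W₂ + μ ^ 2 • (1 : Matrix (Fin n) (Fin n) ℝ))).trace +
        (1 - p / 2) * ∑ i, hA₁.eigenvalues i ^ (p / 2) := by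
    have h := klein hA₁ hA₂ ha hb hr0 hr1
    rw [trace_cfc hA₂, trace_cfc hA₁] at h
    exact h
  rw [hMA₂] at hK
  -- quadratic expansion
  have hQ := quad_expand X M hMt ν p (lam * q) W₁ W₂ hupd'
  have hU₁ : (Matrix.diagonal ν * ((X * W₁ - X)ᵀ * (X * W₁ - X))).trace =
      ∑ i, ν i * e₁ i := by rw [trace_diag_mul_sq]
  have hU₂ : (Matrix.diagonal ν * ((X * W₂ - X)ᵀ * (X * W₂ - X))).trace =
      ∑ i, ν i * e₂ i := by rw [trace_diag_mul_sq]
  have hUΔ : (Matrix.diagonal ν * ((X * (W₁ - W₂))ᵀ * (X * (W₁ - W₂)))).trace =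
      ∑ i, ν i * ∑ j, ((X * (W₁ - W₂)) j i) ^ 2 := trace_diag_mul_sq ν _
  rw [hU₁, hU₂, hUΔ] at hQ
  -- column splittings
  have key₂ : ∑ i, (e₂ i + μ ^ 2) ^ (q / 2) ≤
      q / 2 * ∑ i, ν i * e₂ i + q / 2 * ∑ i, ν i * μ ^ 2 +
        (1 - q / 2) * ∑ i, (e₁ i + μ ^ 2) ^ (q / 2) := by
    calc ∑ i, (e₂ i + μ ^ 2) ^ (q / 2) ≤
        ∑ i, (q / 2 * (ν i * e₂ i) + q / 2 * (ν i * μ ^ 2) +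
          (1 - q / 2) * (e₁ i + μ ^ 2) ^ (q / 2)) :=
          Finset.sum_le_sum fun i _ => le_of_le_of_eq (hcol i) (by ring)
      _ = _ := by
          rw [Finset.sum_add_distrib, Finset.sum_add_distrib, ← Finset.mul_sum,
            ← Finset.mul_sum, ← Finset.mul_sum]
  have key₁ : ∑ i, (e₁ i + μ ^ 2) ^ (q / 2) =
      q / 2 * ∑ i, ν i * e₁ i + q / 2 * ∑ i, ν i * μ ^ 2 +
        (1 - q / 2) * ∑ i, (e₁ i + μ ^ 2) ^ (q / 2) := by
    calc ∑ i, (e₁ i + μ ^ 2) ^ (q / 2) =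
        ∑ i, (q / 2 * (ν i * e₁ i) + q / 2 * (ν i * μ ^ 2) +
          (1 - q / 2) * (e₁ i + μ ^ 2) ^ (q / 2)) := by
          refine Finset.sum_congr rfl fun i _ => ?_
          linear_combination (q / 2) * (hνmul i).symm
      _ = _ := by
          rw [Finset.sum_add_distrib, Finset.sum_add_distrib, ← Finset.mul_sum,
            ← Finset.mul_sum, ← Finset.mul_sum]
  -- J₁ ≤ D pieces
  rw [hJ₁] at hJD
  have hVnn : 0 ≤ ∑ i, (e₁ i + μ ^ 2) ^ (q / 2) :=
    Finset.sum_nonneg fun i _ => Real.rpow_nonneg (he₁pos i).le _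
  have hSAnn : 0 ≤ ∑ i, hA₁.eigenvalues i ^ (p / 2) :=
    Finset.sum_nonneg fun i _ => (Real.rpow_pos_of_pos (ha i) _).le
  have haD : ∀ i, hA₁.eigenvalues i ^ (p / 2) ≤ D := by
    intro i
    have h1 : hA₁.eigenvalues i ^ (p / 2) ≤ ∑ k, hA₁.eigenvalues k ^ (p / 2) :=
      Finset.single_le_sum (fun k _ => (Real.rpow_pos_of_pos (ha k) _).le)
        (Finset.mem_univ i)
    nlinarith [mul_nonneg hlam.le hVnn]
  have hνD : ∀ i, (e₁ i + μ ^ 2) ^ (q / 2) ≤ D / lam := by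
    intro i
    have h1 : (e₁ i + μ ^ 2) ^ (q / 2) ≤ ∑ k, (e₁ k + μ ^ 2) ^ (q / 2) :=
      Finset.single_le_sum (fun k _ => Real.rpow_nonneg (he₁pos k).le _)
        (Finset.mem_univ i)
    rw [le_div_iff₀ hlam]
    nlinarith [mul_le_mul_of_nonneg_left h1 hlam.le]
  -- eigenvalue/weight lower bounds by θ
  have hθM : ∀ i, θ ≤ hA₁.eigenvalues i ^ (p / 2 - 1) := by
    intro i
    have h1 : 0 < hA₁.eigenvalues i ^ (p / 2) := Real.rpow_pos_of_pos (ha i) _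
    have hexp : (p - 2) / p ≤ 0 := by
      apply div_nonpos_of_nonpos_of_nonneg <;> linarith
    have h2 := Real.rpow_le_rpow_of_nonpos h1 (haD i) hexp
    have h3 : (hA₁.eigenvalues i ^ (p / 2)) ^ ((p - 2) / p) =
        hA₁.eigenvalues i ^ (p / 2 - 1) := by
      rw [← Real.rpow_mul (ha i).le]
      congr 1
      field_simp
    rw [h3] at h2
    linarith
  have hθν : ∀ i, θ ≤ ν i := by
    intro i
    have h1 : 0 < (e₁ i + μ ^ 2) ^ (q / 2) := Real.rpow_pos_of_pos (he₁pos i) _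
    have hexp : (q - 2) / q ≤ 0 := by
      apply div_nonpos_of_nonpos_of_nonneg <;> linarith
    have h2 := Real.rpow_le_rpow_of_nonpos h1 (hνD i) hexp
    have h3 : ((e₁ i + μ ^ 2) ^ (q / 2)) ^ ((q - 2) / q) = ν i := by
      rw [hν, ← Real.rpow_mul (he₁pos i).le]
      congr 1
      field_simp
    rw [h3] at h2
    linarith
  -- lower bounds on decrement terms
  have hTΔ : θ * ∑ i, ∑ j, ((W₁ - W₂) i j) ^ 2 ≤
      (M * ((W₁ - W₂)ᵀ * (W₁ - W₂))).trace := by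
    have h : θ * ((W₁ - W₂)ᵀ * (W₁ - W₂)).trace ≤
        (M * ((W₁ - W₂)ᵀ * (W₁ - W₂))).trace :=
      trace_cfc_mul_ge hA₁ (psd_tr_mul_self (W₁ - W₂)) hθM
    rwa [trace_sq] at h
  have hUΔge : θ * ∑ i, ∑ j, ((X * (W₁ - W₂)) i j) ^ 2 ≤
      ∑ i, ν i * ∑ j, ((X * (W₁ - W₂)) j i) ^ 2 := by
    have hc : ∑ i, ∑ j, ((X * (W₁ - W₂)) i j) ^ 2 =
        ∑ i : Fin n, ∑ j : Fin d, ((X * (W₁ - W₂)) j i) ^ 2 := Finset.sum_comm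
    rw [hc, Finset.mul_sum]
    refine Finset.sum_le_sum fun i _ => ?_
    have hnn : 0 ≤ ∑ j, ((X * (W₁ - W₂)) j i) ^ 2 :=
      Finset.sum_nonneg fun j _ => sq_nonneg _
    exact mul_le_mul_of_nonneg_right (hθν i) hnn
  -- pre-multiplied facts for linarith
  have key₂' := mul_le_mul_of_nonneg_left key₂ hlam.le
  have key₁' : lam * ∑ i, (e₁ i + μ ^ 2) ^ (q / 2) =
      lam * (q / 2 * ∑ i, ν i * e₁ i + q / 2 * ∑ i, ν i * μ ^ 2 +
        (1 - q / 2) * ∑ i, (e₁ i + μ ^ 2) ^ (q / 2)) := by rw [← key₁]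
  have hMA₁'' : p / 2 * ((M * (W₁ᵀ * W₁)).trace + μ ^ 2 * M.trace) =
      p / 2 * ∑ i, hA₁.eigenvalues i ^ (p / 2) := by rw [hMA₁']
  have hTΔ' := mul_le_mul_of_nonneg_left hTΔ (le_of_lt (by linarith : (0:ℝ) < p / 2))
  have hUΔ' := mul_le_mul_of_nonneg_left hUΔge
    (le_of_lt (by positivity : (0:ℝ) < lam * q / 2))
  rw [hJ₂, hJ₁]
  linarith [hK, hQ, key₂', key₁', hMA₁'', hTΔ', hUΔ']



set_option maxHeartbeats 1000000 in
/-- Inequality (28): if the sequence `(Z_t)` satisfies the IRLS update equation for every `t`,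
then with `D = J(Z_1, μ)` and `θ = min{D^{(p−2)/p}, (D/λ)^{(q−2)/q}}` the series
`∑_t (p‖Z_t − Z_{t+1}‖_F² + λq‖X(Z_t − Z_{t+1})‖_F²)` converges and its sum is at most
`2D/θ`. -/
theorem stmt_16 {d n : ℕ} (hn : 1 ≤ n) (X : Matrix (Fin d) (Fin n) ℝ) (lam p q μ : ℝ)
    (hlam : 0 < lam) (hμ : 0 < μ) (hp0 : 0 < p) (hp2 : p < 2) (hq0 : 0 < q) (hq2 : q < 2)
    (Z : ℕ → Matrix (Fin n) (Fin n) ℝ)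
    (hupd : ∀ t, p • (Z (t + 1) *
        mpow ((Z t)ᵀ * Z t + μ ^ 2 • (1 : Matrix (Fin n) (Fin n) ℝ)) (p / 2 - 1)) +
      (lam * q) • (Xᵀ * ((X * Z (t + 1) - X) *
        Matrix.diagonal fun i => (∑ j, ((X * Z t - X) j i) ^ 2 + μ ^ 2) ^ (q / 2 - 1))) = 0)
    (D θ : ℝ) (hD : D = smoothJ X lam p q (Z 0) μ)
    (hθ : θ = min (D ^ ((p - 2) / p)) ((D / lam) ^ ((q - 2) / q))) :
    Summable (fun t : ℕ => p * (∑ i, ∑ j, ((Z t - Z (t + 1)) i j) ^ 2) +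
        lam * q * (∑ i, ∑ j, ((X * (Z t - Z (t + 1))) i j) ^ 2)) ∧
      (∑' t : ℕ, (p * (∑ i, ∑ j, ((Z t - Z (t + 1)) i j) ^ 2) +
          lam * q * (∑ i, ∑ j, ((X * (Z t - Z (t + 1))) i j) ^ 2))) ≤ 2 * D / θ := by
  have hne : Nonempty (Fin n) := Fin.pos_iff_nonempty.mp hn
  have hJpos : ∀ t, 0 < smoothJ X lam p q (Z t) μ := by
    intro t
    have hA := herm_AW (Z t) (μ ^ 2)
    have hpd := posdef_AW (Z t) (c := μ ^ 2) (by positivity)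
    rw [smoothJ_eq X lam p q (Z t) μ hA]
    have h1 : 0 < ∑ i, hA.eigenvalues i ^ (p / 2) :=
      Finset.sum_pos (fun i _ => Real.rpow_pos_of_pos (hpd.eigenvalues_pos i) _)
        Finset.univ_nonempty
    have h2 : 0 ≤ lam * ∑ i, (∑ j, ((X * Z t - X) j i) ^ 2 + μ ^ 2) ^ (q / 2) := by
      refine mul_nonneg hlam.le (Finset.sum_nonneg fun i _ => Real.rpow_nonneg ?_ _)
      positivity
    linarith
  have hfnn : ∀ t : ℕ, 0 ≤ p * (∑ i, ∑ j, ((Z t - Z (t + 1)) i j) ^ 2) +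
      lam * q * (∑ i, ∑ j, ((X * (Z t - Z (t + 1))) i j) ^ 2) := by
    intro t
    have h1 : 0 ≤ ∑ i, ∑ j, ((Z t - Z (t + 1)) i j) ^ 2 :=
      Finset.sum_nonneg fun i _ => Finset.sum_nonneg fun j _ => sq_nonneg _
    have h2 : 0 ≤ ∑ i, ∑ j, ((X * (Z t - Z (t + 1))) i j) ^ 2 :=
      Finset.sum_nonneg fun i _ => Finset.sum_nonneg fun j _ => sq_nonneg _
    have := hlam.le
    have := hq0.le
    positivity
  have hmono : ∀ t, smoothJ X lam p q (Z (t + 1)) μ ≤ smoothJ X lam p q (Z t) μ := by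
    intro t
    set Jt := smoothJ X lam p q (Z t) μ with hJt
    have hθ'pos : 0 < min (Jt ^ ((p - 2) / p)) ((Jt / lam) ^ ((q - 2) / q)) :=
      lt_min (Real.rpow_pos_of_pos (hJpos t) _)
        (Real.rpow_pos_of_pos (div_pos (hJpos t) hlam) _)
    have h := one_step hn X lam p q μ hlam hμ hp0 hp2 hq0 hq2 (Z t) (Z (t + 1)) (hupd t)
      Jt (min (Jt ^ ((p - 2) / p)) ((Jt / lam) ^ ((q - 2) / q))) le_rfl
      (min_le_left _ _) (min_le_right _ _)
    have := mul_nonneg (by linarith : (0:ℝ) ≤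
      min (Jt ^ ((p - 2) / p)) ((Jt / lam) ^ ((q - 2) / q)) / 2) (hfnn t)
    linarith
  have hJD : ∀ t, smoothJ X lam p q (Z t) μ ≤ D := by
    intro t
    induction t with
    | zero => exact le_of_eq hD.symm
    | succ t ih => exact (hmono t).trans ih
  have hDpos : 0 < D := hD ▸ hJpos 0
  have hθpos : 0 < θ := by
    rw [hθ]
    exact lt_min (Real.rpow_pos_of_pos hDpos _)
      (Real.rpow_pos_of_pos (div_pos hDpos hlam) _)
  have hstep : ∀ t, smoothJ X lam p q (Z (t + 1)) μ +
      (θ / 2) * (p * (∑ i, ∑ j, ((Z t - Z (t + 1)) i j) ^ 2) +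
        lam * q * (∑ i, ∑ j, ((X * (Z t - Z (t + 1))) i j) ^ 2)) ≤
      smoothJ X lam p q (Z t) μ := fun t =>
    one_step hn X lam p q μ hlam hμ hp0 hp2 hq0 hq2 (Z t) (Z (t + 1)) (hupd t) D θ (hJD t)
      (hθ ▸ min_le_left _ _) (hθ ▸ min_le_right _ _)
  have hpartial : ∀ T : ℕ, ∑ t ∈ Finset.range T,
      (p * (∑ i, ∑ j, ((Z t - Z (t + 1)) i j) ^ 2) +
        lam * q * (∑ i, ∑ j, ((X * (Z t - Z (t + 1))) i j) ^ 2)) ≤ 2 * D / θ := by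
    intro T
    have h1 : (θ / 2) * ∑ t ∈ Finset.range T,
        (p * (∑ i, ∑ j, ((Z t - Z (t + 1)) i j) ^ 2) +
          lam * q * (∑ i, ∑ j, ((X * (Z t - Z (t + 1))) i j) ^ 2)) ≤
        smoothJ X lam p q (Z 0) μ - smoothJ X lam p q (Z T) μ := by
      rw [Finset.mul_sum]
      calc ∑ t ∈ Finset.range T, (θ / 2) *
            (p * (∑ i, ∑ j, ((Z t - Z (t + 1)) i j) ^ 2) +
              lam * q * (∑ i, ∑ j, ((X * (Z t - Z (t + 1))) i j) ^ 2)) ≤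
          ∑ t ∈ Finset.range T,
            (smoothJ X lam p q (Z t) μ - smoothJ X lam p q (Z (t + 1)) μ) := by
            refine Finset.sum_le_sum fun t _ => ?_
            linarith [hstep t]
        _ = _ := Finset.sum_range_sub' (fun t => smoothJ X lam p q (Z t) μ) T
    have h2 : smoothJ X lam p q (Z 0) μ - smoothJ X lam p q (Z T) μ ≤ D := by
      have := hJpos T
      have := hJD 0
      linarith
    rw [le_div_iff₀ hθpos]
    linarith
  have hs := summable_of_sum_range_le hfnn hpartial
  exact ⟨hs, Summable.tsum_le_of_sum_range_le hs hpartial⟩
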